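/- Let $C = \mathbb{C}[\lambda^1,\lambda^2, v^1, v^2, v^3]$ be the free graded-commutative algebra with even generators $\lambda^\alpha$ in degree $0$ and odd generators $v^\mu$ in degree $-1$, with differential $d v^1 = (\lambda^1)^2$, $d v^2 = \lambda^1\lambda^2$, $d v^3 = (\lambda^2)^2$, $d\lambda^\alpha = 0$. Then the cohomology $H^k(C)$ vanishes for all $k \le -2$ (i.e., the only nonvanishing cohomology groups are $H^0 = \mathbb{C}[\lambda]/((\lambda^1)^2,\lambda^1\lambda^2,(\lambda^2)^2)$ and $H^{-1}$). -/

import Mathlib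

/-!
STATEMENT 4: For the Chevalley–Eilenberg complex of the 3d N=1 supertranslation
algebra — the Koszul-type complex over `R = ℂ[λ¹,λ²]` on the odd generators
`v¹,v²,v³` with `dv¹ = (λ¹)², dv² = λ¹λ², dv³ = (λ²)²` — the cohomology
vanishes in all degrees `k ≤ -2`.  Writing the degree `-3`, `-2`, `-1`
components as `R`, `R³` (basis `v²∧v³, v¹∧v³, v¹∧v²`) and `R³` (basis
`v¹,v²,v³`), this says: `ker d₋₂ = range d₋₃` and `ker d₋₃ = 0`.
(Degrees `≤ -4` vanish identically since the complex stops.)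
-/

open MvPolynomial

noncomputable abbrev R4 := MvPolynomial (Fin 2) ℂ

/-- the quadrics `q₁ = (λ¹)², q₂ = λ¹λ², q₃ = (λ²)²` -/
noncomputable def q4 : Fin 3 → R4 := ![(X 0) ^ 2, X 0 * X 1, (X 1) ^ 2]

/-- `d₋₂ : Λ² → Λ¹`, with `d(vⁱ∧vʲ) = qᵢ vʲ - qⱼ vⁱ`; Λ²-basis indexed by
`0 ↦ v²∧v³`, `1 ↦ v¹∧v³`, `2 ↦ v¹∧v²`. -/
noncomputable def dMinus2 : (Fin 3 → R4) →ₗ[R4] (Fin 3 → R4) where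
  toFun a := fun j =>
    a 0 * ![0, -(q4 2), q4 1] j + a 1 * ![-(q4 2), 0, q4 0] j +
      a 2 * ![-(q4 1), q4 0, 0] j
  map_add' a b := by
    funext j; fin_cases j <;> simp <;> ring
  map_smul' r a := by
    funext j; fin_cases j <;> simp [smul_eq_mul] <;> ring

/-- `d₋₃ : Λ³ → Λ²`, `d(v¹∧v²∧v³) = q₁ v²∧v³ - q₂ v¹∧v³ + q₃ v¹∧v²`. -/
noncomputable def dMinus3 : R4 →ₗ[R4] (Fin 3 → R4) where
  toFun c := fun j => c * ![q4 0, -(q4 1), q4 2] j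
  map_add' a b := by funext j; simp; ring
  map_smul' r a := by funext j; simp [smul_eq_mul]; ring

lemma primeX0 : Prime (X 0 : R4) := by
  rw [← MulEquiv.prime_iff (MvPolynomial.finSuccEquiv ℂ 1).toMulEquiv]
  simpa [MvPolynomial.finSuccEquiv_X_zero] using Polynomial.prime_X

lemma X0_not_dvd_X1 : ¬ (X 0 : R4) ∣ X 1 := by
  simp [MvPolynomial.X_dvd_X]

theorem CE_cohomology_3dN1_vanishes_below_degree_minus_one :
    LinearMap.ker dMinus2 = LinearMap.range dMinus3 ∧
    LinearMap.ker dMinus3 = ⊥ := by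
  have hX0 : Prime (X 0 : R4) := primeX0
  have hX0ne : (X 0 : R4) ≠ 0 := hX0.ne_zero
  constructor
  · apply le_antisymm
    · intro a ha
      rw [LinearMap.mem_ker] at ha
      have h0 := congrFun ha 0
      have h1 := congrFun ha 1
      have h2 := congrFun ha 2
      simp only [dMinus2, q4, LinearMap.coe_mk, AddHom.coe_mk] at h0 h1 h2
      simp at h0 h1 h2
      -- h2 : a 0 * (X 0 * X 1) + a 1 * X 0 ^ 2 = 0
      have e2 : (X 0 : R4) * (a 0 * X 1 + a 1 * X 0) = 0 := by
        rw [← h2]; ring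
      have e2' : a 0 * X 1 = -(a 1 * X 0) := by
        have := (mul_eq_zero.mp e2).resolve_left hX0ne
        linear_combination this
      have hdvd0 : (X 0 : R4) ∣ a 0 := by
        rcases hX0.dvd_mul.mp ⟨-(a 1), by rw [e2']; ring⟩ with h | h
        · exact h
        · exact absurd h X0_not_dvd_X1
      obtain ⟨b, hb⟩ := hdvd0
      have ha1 : a 1 = -(b * X 1) := by
        have : (X 0 : R4) * (a 1 + b * X 1) = 0 := by
          rw [hb] at e2'; linear_combination e2'
        have := (mul_eq_zero.mp this).resolve_left hX0ne
        linear_combination this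
      -- h1 : from degree -2 component j = 1
      have e1 : a 2 * X 0 = b * X 1 ^ 2 := by
        have hh : (X 0 : R4) * (a 2 * X 0 - b * X 1 ^ 2) = 0 := by
          rw [hb] at h1; linear_combination h1
        have := (mul_eq_zero.mp hh).resolve_left hX0ne
        linear_combination this
      have hdvdb : (X 0 : R4) ∣ b := by
        rcases hX0.dvd_mul.mp ⟨a 2, by rw [← e1]; ring⟩ with h | h
        · exact h
        · exact absurd (hX0.dvd_of_dvd_pow (n := 2) h) X0_not_dvd_X1
      obtain ⟨c, hc⟩ := hdvdb
      have ha2 : a 2 = c * X 1 ^ 2 := by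
        have hh : (X 0 : R4) * (a 2 - c * X 1 ^ 2) = 0 := by
          rw [hc] at e1; linear_combination e1
        have := (mul_eq_zero.mp hh).resolve_left hX0ne
        linear_combination this
      refine ⟨c, ?_⟩
      funext j
      fin_cases j <;> simp [dMinus3, q4, hb, hc, ha1, ha2] <;> ring
    · rintro _ ⟨c, rfl⟩
      rw [LinearMap.mem_ker]
      funext j
      fin_cases j <;> simp only [dMinus2, dMinus3, q4, LinearMap.coe_mk, AddHom.coe_mk] <;> simp <;> ring
  · rw [LinearMap.ker_eq_bot']
    intro c hc
    have h0 := congrFun hc 0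
    simp [dMinus3, q4] at h0
    exact h0
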